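/- Let κ be an infinite cardinal, V : Type u, and E : V ≃ {S : Set V // #S ≤ κ} a bijection (a fixpoint of the κ-powerclass functor). Define the membership relation x ε y to mean x ∈ (E y).val. Then (V, ε) satisfies the following set-theoretic axioms: Extensionality: for all a b : V, if (∀ x, x ε a ↔ x ε b) then a = b; Pairing: for all x y : V there exists t with ∀ z, z ε t ↔ (z = x ∨ z = y); Union: for all x there exists t with ∀ z, z ε t ↔ ∃ y, z ε y ∧ y ε x; Empty set: there exists x with ∀ z, ¬(z ε x); Binary Intersection: for all a b there exists t with ∀ z, z ε t ↔ (z ε a ∧ z ε b); Replacement: for every relation φ : V → V → Prop and every a : V, if for every x with x ε a there exists a unique y with φ x y, then there exists t such that ∀ y, y ε t ↔ ∃ x, x ε a ∧ φ x y. -/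
import Mathlib


open Cardinal

universe u

theorem powerclass_fixpoint_models_CZF₀ (κ : Cardinal.{u}) (hκ : ℵ₀ ≤ κ)
    (V : Type u) (E : V ≃ {S : Set V // #S ≤ κ}) :
    -- Extensionality
    (∀ a b : V, (∀ x : V, x ∈ (E a).val ↔ x ∈ (E b).val) → a = b) ∧
    -- Pairing
    (∀ x y : V, ∃ t : V, ∀ z : V, z ∈ (E t).val ↔ (z = x ∨ z = y)) ∧
    -- Union
    (∀ x : V, ∃ t : V, ∀ z : V, z ∈ (E t).val ↔ ∃ y : V, z ∈ (E y).val ∧ y ∈ (E x).val) ∧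
    -- Emptyset
    (∃ x : V, ∀ z : V, ¬ z ∈ (E x).val) ∧
    -- Binary intersection
    (∀ a b : V, ∃ t : V, ∀ z : V, z ∈ (E t).val ↔ (z ∈ (E a).val ∧ z ∈ (E b).val)) ∧
    -- Replacement
    (∀ (φ : V → V → Prop) (a : V), (∀ x : V, x ∈ (E a).val → ∃! y : V, φ x y) →
      ∃ t : V, ∀ y : V, y ∈ (E t).val ↔ ∃ x : V, x ∈ (E a).val ∧ φ x y) := by
  have key : ∀ (S : Set V) (h : #S ≤ κ), ∃ t : V, (E t).val = S := by
    intro S h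
    exact ⟨E.symm ⟨S, h⟩, by simp⟩
  refine ⟨?_, ?_, ?_, ?_, ?_, ?_⟩
  · intro a b h
    have : (E a) = (E b) := Subtype.ext (Set.ext h)
    exact E.injective this
  · intro x y
    have h : #({x, y} : Set V) ≤ κ :=
      le_trans (((Set.finite_singleton y).insert x).lt_aleph0).le hκ
    obtain ⟨t, ht⟩ := key _ h
    exact ⟨t, fun z => by simp [ht]⟩
  · intro x
    set S : Set V := ⋃ y ∈ (E x).val, (E y).val with hS
    have h : #S ≤ κ := by
      calc #S ≤ #((E x).val) * ⨆ y : (E x).val, #((E y.val).val) := Cardinal.mk_biUnion_le _ _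
        _ ≤ κ * κ := mul_le_mul' (E x).prop (ciSup_le' fun y => (E y.val).prop)
        _ = κ := Cardinal.mul_eq_self hκ
    obtain ⟨t, ht⟩ := key _ h
    exact ⟨t, fun z => by simp only [ht, hS, Set.mem_iUnion, exists_prop]; tauto⟩
  · obtain ⟨t, ht⟩ := key ∅ (by simp)
    exact ⟨t, fun z => by simp [ht]⟩
  · intro a b
    have h : #((E a).val ∩ (E b).val : Set V) ≤ κ :=
      le_trans (Cardinal.mk_le_mk_of_subset Set.inter_subset_left) (E a).prop
    obtain ⟨t, ht⟩ := key _ h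
    exact ⟨t, fun z => by simp [ht]⟩
  · intro φ a hφ
    set S : Set V := {y | ∃ x ∈ (E a).val, φ x y} with hS
    have hsub : S ⊆ Set.range (fun x : (E a).val => (hφ x.1 x.2).choose) := by
      rintro y ⟨x, hx, hxy⟩
      exact ⟨⟨x, hx⟩, ((hφ x hx).choose_spec.2 y hxy).symm⟩
    have h : #S ≤ κ :=
      le_trans (Cardinal.mk_le_mk_of_subset hsub)
        (le_trans Cardinal.mk_range_le (E a).prop)
    obtain ⟨t, ht⟩ := key _ h
    exact ⟨t, fun y => by simp [ht, hS]⟩
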